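/- For all natural numbers a, b, c, m, p, we have ∑_{k=0}^{a} C(a,k)·C(b,m+k)·C(k,c)·C(p−k, a+b−c) = C(m+p−b, m+a)·C(p−a, b−m−c)·C(a,c). -/

import Mathlib

open Finset

/-- Binomial coefficient for integers: `C x y` is the usual binomial coefficient
when `0 ≤ y ≤ x`, and `0` otherwise. -/
def C (x y : ℤ) : ℤ := if 0 ≤ y ∧ y ≤ x then (x.toNat.choose y.toNat : ℤ) else 0

lemma C_eq_zero {x y : ℤ} (h : ¬ (0 ≤ y ∧ y ≤ x)) : C x y = 0 := if_neg h

lemma C_ne_zero {x y : ℤ} (h : C x y ≠ 0) : 0 ≤ y ∧ y ≤ x := by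
  by_contra hc; exact h (C_eq_zero hc)

lemma C_cast (x : ℤ) (hx : 0 ≤ x) (i : ℕ) : C x i = (x.toNat.choose i : ℤ) := by
  unfold C
  split
  · norm_num
  · rename_i h
    rw [Nat.choose_eq_zero_of_lt (by omega)]
    simp

lemma C_symm (x y : ℤ) (hx : 0 ≤ x) : C x y = C x (x - y) := by
  unfold C
  by_cases h : 0 ≤ y ∧ y ≤ x
  · rw [if_pos h, if_pos (by omega)]
    have : (x - y).toNat = x.toNat - y.toNat := by omega
    rw [this, Nat.choose_symm (by omega)]
  · rw [if_neg h, if_neg (by omega)]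

lemma C_chain (x y z : ℤ) : C x y * C y z = C x z * C (x - z) (y - z) := by
  by_cases h : 0 ≤ z ∧ z ≤ y ∧ y ≤ x
  · unfold C
    rw [if_pos ⟨by omega, by omega⟩, if_pos ⟨by omega, by omega⟩,
      if_pos ⟨by omega, by omega⟩, if_pos ⟨by omega, by omega⟩]
    have h1 : y.toNat ≤ x.toNat := by omega
    have h2 : z.toNat ≤ y.toNat := by omega
    have := Nat.choose_mul (n := x.toNat) h2
    have e1 : (x - z).toNat = x.toNat - z.toNat := by omega
    have e2 : (y - z).toNat = y.toNat - z.toNat := by omega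
    rw [e1, e2]
    exact_mod_cast this
  · have h1 : C x y = 0 ∨ C y z = 0 := by
      by_contra hc
      push_neg at hc
      have a1 := C_ne_zero hc.1
      have a2 := C_ne_zero hc.2
      exact h ⟨a2.1, a2.2, a1.2⟩
    have h2 : C x z = 0 ∨ C (x - z) (y - z) = 0 := by
      by_contra hc
      push_neg at hc
      have a1 := C_ne_zero hc.1
      have a2 := C_ne_zero hc.2
      exact h ⟨a1.1, by omega, by omega⟩
    rcases h1 with h1 | h1 <;> rcases h2 with h2 | h2 <;> rw [h1, h2] <;> ring

lemma vander (x y t : ℤ) (N : ℕ) (hx : 0 ≤ x) (hxN : x ≤ N) (hy : 0 ≤ y) :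
    ∑ i ∈ Finset.range (N + 1), C x i * C y (t - i) = C (x + y) t := by
  by_cases ht : 0 ≤ t ∧ t ≤ x + y
  · set T := t.toNat with hT
    have hTle : T ≤ x.toNat + y.toNat := by omega
    have key : ((x.toNat + y.toNat).choose T : ℤ)
        = ∑ i ∈ Finset.range (T + 1), (x.toNat.choose i : ℤ) * (y.toNat.choose (T - i) : ℤ) := by
      rw [Nat.add_choose_eq, Finset.Nat.sum_antidiagonal_eq_sum_range_succ_mk]
      push_cast
      rfl
    have hrhs : C (x + y) t = ((x.toNat + y.toNat).choose T : ℤ) := by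
      rw [show t = (T : ℤ) by omega, C_cast _ (by omega)]
      congr 2
      omega
    rw [hrhs, key]
    -- now show LHS sum over range (N+1) equals sum over range (T+1)
    have hsupp : ∀ i : ℕ, (x < i ∨ (t:ℤ) < i) → C x i * C y (t - i) = 0 := by
      intro i hi
      rcases hi with hi | hi
      · rw [C_eq_zero (by omega)]; ring
      · rw [C_eq_zero (x := y) (y := t - i) (by omega)]; ring
    have hterm : ∀ i ∈ Finset.range (T + 1), C x i * C y (t - i)
        = (x.toNat.choose i : ℤ) * (y.toNat.choose (T - i) : ℤ) := by
      intro i hi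
      simp only [Finset.mem_range] at hi
      rw [C_cast _ hx, show t - (i:ℤ) = ((T - i : ℕ) : ℤ) by omega, C_cast _ hy]
    rw [← Finset.sum_congr rfl hterm]
    -- both sums equal sum over range (max N T + 1)
    have big : ∀ M : ℕ, N ≤ M → T ≤ M →
        ∑ i ∈ Finset.range (M + 1), C x i * C y (t - i)
          = ∑ i ∈ Finset.range (T + 1), C x i * C y (t - i) := by
      intro M hM hTM
      symm
      apply Finset.sum_subset
      · intro i hi; simp only [Finset.mem_range] at *; omega
      · intro i hi hni
        simp only [Finset.mem_range] at hi hni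
        exact hsupp i (by omega)
    have l1 : ∑ i ∈ Finset.range (N + 1), C x i * C y (t - i)
        = ∑ i ∈ Finset.range (max N T + 1), C x i * C y (t - i) := by
      apply Finset.sum_subset
      · intro i hi; simp only [Finset.mem_range] at *; omega
      · intro i hi hni
        simp only [Finset.mem_range] at hi hni
        exact hsupp i (by omega)
    rw [l1, big (max N T) (le_max_left _ _) (le_max_right _ _)]
  · rw [C_eq_zero ht]
    apply Finset.sum_eq_zero
    intro i hi
    by_cases h1 : (t:ℤ) - i < 0
    · rw [C_eq_zero (x := y) (y := t - i) (by omega)]; ring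
    · by_cases h2 : x < i
      · rw [C_eq_zero (x := x) (y := (i:ℤ)) (by omega)]; ring
      · rw [C_eq_zero (x := y) (y := t - i) (by omega)]; ring

lemma trinom (n : ℕ) (i j : ℤ) (hj : 0 ≤ j) (hjn : j ≤ n) :
    C n j * C ((n : ℤ) - j) i = C n i * C ((n : ℤ) - i) j := by
  by_cases hi : 0 ≤ i ∧ i ≤ (n : ℤ) - j
  · rw [show C (n : ℤ) j = C (n : ℤ) ((n : ℤ) - j) from C_symm _ _ (by positivity)]
    rw [C_chain (n : ℤ) ((n : ℤ) - j) i]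
    congr 1
    rw [C_symm ((n:ℤ) - i) ((n:ℤ) - j - i) (by omega)]
    congr 1
    ring
  · rw [C_eq_zero (x := (n:ℤ) - j) (y := i) hi]
    by_cases h1 : i < 0
    · rw [C_eq_zero (x := (n:ℤ)) (y := i) (by omega)]; ring
    · rw [C_eq_zero (x := (n:ℤ) - i) (y := j) (by omega)]; ring

lemma core (n b : ℕ) (s q : ℤ) (hs : 0 ≤ s) :
    ∑ j ∈ Finset.range (n + 1), C n j * C b (s + j) * C (q - j) ((n : ℤ) + b) =
      C (q + s - b) ((n : ℤ) + s) * C (q - n) ((b : ℤ) - s) := by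
  by_cases hq : q < n
  · rw [C_eq_zero (x := q - (n:ℤ)) (y := (b:ℤ) - s) (by omega), mul_zero]
    apply Finset.sum_eq_zero
    intro j hj
    simp only [Finset.mem_range] at hj
    rw [C_eq_zero (x := q - (j:ℤ)) (y := (n:ℤ) + b) (by omega)]
    ring
  push_neg at hq
  have step1 : ∀ j ∈ Finset.range (n + 1),
      C n j * C b (s + j) * C (q - j) ((n : ℤ) + b)
        = ∑ i ∈ Finset.range (n + 1),
            (C n i * C (q - n) ((n:ℤ) + b - i)) * (C ((n:ℤ) - i) j * C b ((b - s) - j)) := by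
    intro j hj
    simp only [Finset.mem_range] at hj
    have hv := vander ((n:ℤ) - j) (q - n) ((n:ℤ) + b) n (by omega) (by omega) (by omega)
    have h2 : C (q - j) ((n:ℤ) + b)
        = ∑ i ∈ Finset.range (n + 1), C ((n:ℤ) - j) i * C (q - n) ((n:ℤ) + b - i) := by
      rw [hv]; congr 1; ring
    rw [h2, Finset.mul_sum]
    apply Finset.sum_congr rfl
    intro i hi
    simp only [Finset.mem_range] at hi
    have ht := trinom n i j (by omega) (by omega)
    have hsym : C b (s + j) = C b ((b - s) - j) := by
      rw [C_symm (b:ℤ) (s + j) (by positivity)]; congr 1; ring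
    calc C (n:ℕ) j * C b (s + j) * (C ((n:ℤ) - j) i * C (q - n) ((n:ℤ) + b - i))
        = (C (n:ℕ) j * C ((n:ℤ) - j) i) * (C b (s + j) * C (q - n) ((n:ℤ) + b - i)) := by ring
      _ = (C (n:ℕ) i * C ((n:ℤ) - i) j) * (C b ((b - s) - j) * C (q - n) ((n:ℤ) + b - i)) := by
          rw [ht, hsym]
      _ = (C n i * C (q - n) ((n:ℤ) + b - i)) * (C ((n:ℤ) - i) j * C b ((b - s) - j)) := by ring
  rw [Finset.sum_congr rfl step1, Finset.sum_comm]
  have step3 : ∀ i ∈ Finset.range (n + 1),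
      ∑ j ∈ Finset.range (n + 1),
          (C n i * C (q - n) ((n:ℤ) + b - i)) * (C ((n:ℤ) - i) j * C b ((b - s) - j))
        = C (q - n) ((b:ℤ) - s) * (C n i * C (q - n - b + s) (((n:ℤ) + s) - i)) := by
    intro i hi
    simp only [Finset.mem_range] at hi
    rw [← Finset.mul_sum,
      vander ((n:ℤ) - i) b ((b:ℤ) - s) n (by omega) (by omega) (by omega)]
    have hch : C (q - n) ((n:ℤ) + b - i) * C ((n:ℤ) - i + b) ((b:ℤ) - s)
        = C (q - n) ((b:ℤ) - s) * C (q - n - b + s) (((n:ℤ) + s) - i) := by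
      rw [show ((n:ℤ) - i + b) = (n:ℤ) + b - i from by ring] at *
      rw [C_chain (q - (n:ℤ)) ((n:ℤ) + b - i) ((b:ℤ) - s)]
      congr 1
      · congr 1 <;> ring
    calc C (n:ℕ) i * C (q - n) ((n:ℤ) + b - i) * C ((n:ℤ) - i + b) ((b:ℤ) - s)
        = C (n:ℕ) i * (C (q - n) ((n:ℤ) + b - i) * C ((n:ℤ) - i + b) ((b:ℤ) - s)) := by ring
      _ = C (n:ℕ) i * (C (q - n) ((b:ℤ) - s) * C (q - n - b + s) (((n:ℤ) + s) - i)) := by rw [hch]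
      _ = C (q - n) ((b:ℤ) - s) * (C n i * C (q - n - b + s) (((n:ℤ) + s) - i)) := by ring
  rw [Finset.sum_congr rfl step3, ← Finset.mul_sum]
  by_cases hM : 0 ≤ q - n - b + s
  · rw [vander (n:ℤ) (q - n - b + s) ((n:ℤ) + s) n (by omega) (by omega) hM]
    rw [show (n:ℤ) + (q - n - b + s) = q + s - b from by ring]
    ring
  · rw [C_eq_zero (x := q + s - (b:ℤ)) (y := (n:ℤ) + s) (by omega)]
    rw [Finset.sum_eq_zero, mul_zero, zero_mul]
    intro i hi
    rw [C_eq_zero (x := q - n - b + s) (y := ((n:ℤ) + s) - i) (by omega)]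
    ring

theorem stmt_15 (a b c m p : ℕ) :
    ∑ k ∈ Finset.range (a + 1), C a k * C b ((m : ℤ) + k) * C k c * C ((p : ℤ) - k) ((a : ℤ) + b - c) = C ((m : ℤ) + p - b) ((m : ℤ) + a) * C ((p : ℤ) - a) ((b : ℤ) - m - c) * C a c := by
  by_cases hca : a < c
  · rw [C_eq_zero (x := (a:ℤ)) (y := (c:ℤ)) (by push_cast; omega), mul_zero]
    apply Finset.sum_eq_zero
    intro k hk
    simp only [Finset.mem_range] at hk
    rw [C_eq_zero (x := (k:ℤ)) (y := (c:ℤ)) (by push_cast; omega)]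
    ring
  push_neg at hca
  set n : ℕ := a - c with hn
  have hac : (a : ℤ) = (n : ℤ) + c := by push_cast; omega
  set F : ℕ → ℤ := fun k =>
    C ((a:ℤ) - c) ((k:ℤ) - c) * C b ((m:ℤ) + k) * C ((p:ℤ) - k) ((a:ℤ) + b - c) with hF
  have step1 : ∀ k ∈ Finset.range (a + 1),
      C a k * C b ((m : ℤ) + k) * C k c * C ((p : ℤ) - k) ((a : ℤ) + b - c)
        = C a c * F k := by
    intro k hk
    have hch := C_chain (a : ℤ) (k : ℤ) (c : ℤ)
    simp only [hF]
    calc C (a:ℕ) k * C b ((m:ℤ) + k) * C k c * C ((p:ℤ) - k) ((a:ℤ) + b - c)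
        = (C (a:ℕ) k * C (k:ℕ) c) * (C b ((m:ℤ) + k) * C ((p:ℤ) - k) ((a:ℤ) + b - c)) := by
          ring
      _ = (C (a:ℕ) c * C ((a:ℤ) - c) ((k:ℤ) - c)) * (C b ((m:ℤ) + k) * C ((p:ℤ) - k) ((a:ℤ) + b - c)) := by
          rw [hch]
      _ = C a c * (C ((a:ℤ) - c) ((k:ℤ) - c) * C b ((m:ℤ) + k) * C ((p:ℤ) - k) ((a:ℤ) + b - c)) := by
          ring
  rw [Finset.sum_congr rfl step1, ← Finset.mul_sum]
  have reindex : ∑ k ∈ Finset.range (a + 1), F k = ∑ j ∈ Finset.range (n + 1), F (j + c) := by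
    rw [show ∑ j ∈ Finset.range (n + 1), F (j + c)
        = ∑ k ∈ (Finset.range (n + 1)).image (· + c), F k from
      (Finset.sum_image (by intro x _ y _ h; simp only at h; omega)).symm]
    symm
    apply Finset.sum_subset
    · intro k hk
      simp only [Finset.mem_image, Finset.mem_range] at hk ⊢
      obtain ⟨j, hj, rfl⟩ := hk
      omega
    · intro k hk hnk
      simp only [Finset.mem_image, Finset.mem_range] at hk hnk
      have hkc : k < c := by
        by_contra h
        exact hnk ⟨k - c, by omega, by omega⟩
      simp only [hF]
      rw [C_eq_zero (x := (a:ℤ) - c) (y := (k:ℤ) - c) (by push_cast; omega)]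
      ring
  rw [reindex]
  have hterm : ∀ j ∈ Finset.range (n + 1), F (j + c)
      = C n j * C b (((m:ℤ) + c) + j) * C (((p:ℤ) - c) - j) ((n:ℤ) + b) := by
    intro j hj
    simp only [hF]
    congr 1
    · congr 1
      · congr 1 <;> push_cast <;> omega
      · congr 1; push_cast; ring
    · congr 1 <;> push_cast <;> [ring; omega]
  rw [Finset.sum_congr rfl hterm, core n b ((m:ℤ) + c) ((p:ℤ) - c) (by positivity)]
  rw [show (p:ℤ) - c + ((m:ℤ) + c) - b = (m:ℤ) + p - b from by ring,
    show (n:ℤ) + ((m:ℤ) + c) = (m:ℤ) + a from by omega,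
    show (p:ℤ) - c - n = (p:ℤ) - a from by omega,
    show (b:ℤ) - ((m:ℤ) + c) = (b:ℤ) - m - c from by ring]
  ring
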